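/- In a finite Dung argumentation framework (A, R), a set S ⊆ A is a complete extension if and only if there exists a complete labelling λ : A → {+,-,?} such that S = {a ∈ A | λ(a) = +}. -/
import Mathlib


inductive Lab : Type
  | plus | minus | quest
deriving DecidableEq

section
variable {A : Type*} (R : A → A → Prop)

def ConflictFree (S : Set A) : Prop := ∀ a ∈ S, ∀ b ∈ S, ¬ R a b

def Defends (S : Set A) (a : A) : Prop := ∀ b, R b a → ∃ c ∈ S, R c b

/-- S is a complete extension iff it is conflict-free and contains
exactly the arguments it defends. -/
def CompleteExt (S : Set A) : Prop :=
  ConflictFree R S ∧ ∀ a, a ∈ S ↔ Defends R S a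

def CompleteLab (lab : A → Lab) : Prop :=
  ∀ a, (lab a = Lab.plus ↔ ∀ b, R b a → lab b = Lab.minus) ∧
       (lab a = Lab.minus ↔ ∃ b, R b a ∧ lab b = Lab.plus)

end

theorem complete_ext_iff_labelling {A : Type*} [Fintype A] (R : A → A → Prop)
    (S : Set A) :
    CompleteExt R S ↔ ∃ lab : A → Lab, CompleteLab R lab ∧ S = {a | lab a = Lab.plus} := by
  classical
  constructor
  · rintro ⟨hcf, hcomp⟩
    set lab : A → Lab := fun a =>
      if a ∈ S then Lab.plus else if ∃ b ∈ S, R b a then Lab.minus else Lab.quest with hlab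
    have hplus : ∀ a, lab a = Lab.plus ↔ a ∈ S := by
      intro a
      by_cases h : a ∈ S
      · simp [hlab, h]
      · by_cases h2 : ∃ b ∈ S, R b a <;> simp [hlab, h, h2]
    have hminus : ∀ a, lab a = Lab.minus ↔ a ∉ S ∧ ∃ b ∈ S, R b a := by
      intro a
      by_cases h : a ∈ S
      · simp [hlab, h]
      · by_cases h2 : ∃ b ∈ S, R b a <;> simp [hlab, h, h2]
    refine ⟨lab, ?_, ?_⟩
    · intro a
      constructor
      · rw [hplus]
        constructor
        · intro ha b hba
          rw [hminus]
          have hbS : b ∉ S := fun hb => hcf b hb a ha hba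
          exact ⟨hbS, (hcomp a).1 ha b hba⟩
        · intro h
          rw [hcomp]
          intro b hba
          exact ((hminus b).1 (h b hba)).2
      · rw [hminus]
        constructor
        · rintro ⟨_, b, hb, hba⟩
          exact ⟨b, hba, (hplus b).2 hb⟩
        · rintro ⟨b, hba, hb⟩
          rw [hplus] at hb
          exact ⟨fun ha => hcf b hb a ha hba, b, hb, hba⟩
    · ext a; simp [hplus a]
  · rintro ⟨lab, hlab, rfl⟩
    constructor
    · intro a ha b hb hab
      have := (hlab b).1.1 hb a hab
      rw [ha] at this; exact Lab.noConfusion this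
    · intro a
      simp only [Set.mem_setOf_eq]
      rw [(hlab a).1]
      constructor
      · intro h b hba
        obtain ⟨c, hcb, hc⟩ := (hlab b).2.1 (h b hba)
        exact ⟨c, hc, hcb⟩
      · intro h b hba
        obtain ⟨c, hc, hcb⟩ := h b hba
        exact (hlab b).2.2 ⟨c, hcb, hc⟩
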